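/- Let F be a normalized finite Orlicz function with F(s) > 0 for every s > 0. Suppose that for every t ≥ 0 the limit G(t) := lim_{s→∞} F(st)/F(s) exists and is finite. Then G is an Orlicz function (convex, nondecreasing, G(0) = 0), and E_F = C_F = {G|_{[0,1/2]}}; in particular, every H ∈ C_F satisfies H(t) = G(t) for all t ∈ [0,1/2], and the restriction of G to [0,1/2] belongs to E_F. -/

import Mathlib

open Set Filter Topology

/-- `G` belongs to `E_F = ⋂_{b ≥ 0} E_{F,b}`, where `E_{F,b}` is the closure, in the topology
of uniform convergence on `[0,1/2]`, of the set of flows `{F_s : s > b}`,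
`F_s (t) = F (s t) / F s`. (Only the values of `G` on `[0,1/2]` are relevant.) -/
def MemFlowClosure (F : ℝ → ℝ) (G : ℝ → ℝ) : Prop :=
  ∀ b : ℝ, 0 ≤ b → ∀ ε : ℝ, 0 < ε → ∃ s : ℝ, b < s ∧
    ∀ t ∈ Icc (0:ℝ) (1/2), |F (s * t) / F s - G t| ≤ ε

/-- `G` belongs to `C_F = ⋂_{b ≥ 0} C_{F,b}`, where `C_{F,b}` is the closure, in the topology
of uniform convergence on `[0,1/2]`, of the convex hull of the set of flows `{F_s : s > b}`. -/
def MemFlowConvexClosure (F : ℝ → ℝ) (G : ℝ → ℝ) : Prop :=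
  ∀ b : ℝ, 0 ≤ b → ∀ ε : ℝ, 0 < ε →
    ∃ (m : ℕ) (lam : Fin m → ℝ) (s : Fin m → ℝ),
      (∀ i, 0 ≤ lam i) ∧ (∑ i, lam i = 1) ∧ (∀ i, b < s i) ∧
      ∀ t ∈ Icc (0:ℝ) (1/2), |(∑ i, lam i * (F (s i * t) / F (s i))) - G t| ≤ ε

private lemma aux_lip (f : ℝ → ℝ) (hconv : ConvexOn ℝ (Ici (0:ℝ)) f)
    (hmono : MonotoneOn f (Ici (0:ℝ))) (hnn : ∀ x : ℝ, 0 ≤ x → 0 ≤ f x) (hf1 : f 1 = 1)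
    {u v : ℝ} (hu : 0 ≤ u) (huv : u ≤ v) (hv : v ≤ 3/4) :
    |f v - f u| ≤ 4 * (v - u) := by
  rcases eq_or_lt_of_le huv with rfl | hlt
  · simp
  · have h1 : v < 1 := lt_of_le_of_lt hv (by norm_num)
    have hu1 : u < 1 := lt_trans hlt h1
    have ha : (0:ℝ) ≤ (1-v)/(1-u) := div_nonneg (by linarith) (by linarith)
    have hb : (0:ℝ) ≤ (v-u)/(1-u) := div_nonneg (by linarith) (by linarith)
    have hne : (1:ℝ)-u ≠ 0 := by linarith
    have hab : (1-v)/(1-u) + (v-u)/(1-u) = 1 := by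
      field_simp
      ring
    have hx : f ((1-v)/(1-u) * u + (v-u)/(1-u) * 1) ≤ (1-v)/(1-u) * f u + (v-u)/(1-u) * f 1 :=
      hconv.2 (mem_Ici.2 hu) (mem_Ici.2 zero_le_one) ha hb hab
    have harg : (1-v)/(1-u) * u + (v-u)/(1-u) * 1 = v := by
      field_simp; ring
    rw [harg, hf1, mul_one] at hx
    have hmono' : f u ≤ f v := hmono (mem_Ici.2 hu) (mem_Ici.2 (le_trans hu huv)) huv
    rw [abs_of_nonneg (by linarith)]
    have hfu : 0 ≤ f u := hnn u hu
    have key : f v - f u ≤ (v-u)/(1-u) := by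
      have hcoef : (1-v)/(1-u) = 1 - (v-u)/(1-u) := by field_simp; ring
      rw [hcoef] at hx
      nlinarith [mul_nonneg hb hfu]
    have h2 : (v-u)/(1-u) ≤ 4*(v-u) := by
      rw [div_le_iff₀ (by linarith)]
      nlinarith
    linarith

/-- Let `F` be a normalized finite Orlicz function with `F s > 0` for `s > 0`.
If `G t := lim_{s → ∞} F (s t) / F s` exists and is finite for every `t ≥ 0`, then `G` is an
Orlicz function (convex, nondecreasing, `G 0 = 0`) and `E_F = C_F = {G|_{[0,1/2]}}`: every
`H ∈ C_F` coincides with `G` on `[0,1/2]`, and `G` itself belongs to `E_F`. -/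
theorem statement12 (F : ℝ → ℝ)
    (hFconv : ConvexOn ℝ (Ici (0:ℝ)) F) (hFmono : MonotoneOn F (Ici (0:ℝ)))
    (hF0 : F 0 = 0) (hF1 : F 1 = 1)
    (hFpos : ∀ s : ℝ, 0 < s → 0 < F s)
    (G : ℝ → ℝ)
    (hG : ∀ t : ℝ, 0 ≤ t → Tendsto (fun s : ℝ => F (s * t) / F s) atTop (𝓝 (G t))) :
    (ConvexOn ℝ (Ici (0:ℝ)) G ∧ MonotoneOn G (Ici (0:ℝ)) ∧ G 0 = 0) ∧
    (∀ H : ℝ → ℝ, (MemFlowClosure F H ↔ MemFlowConvexClosure F H)) ∧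
    (∀ H : ℝ → ℝ, MemFlowConvexClosure F H → ∀ t ∈ Icc (0:ℝ) (1/2), H t = G t) ∧
    MemFlowClosure F G := by
  -- basic facts about F
  have hFnn : ∀ x : ℝ, 0 ≤ x → 0 ≤ F x := fun x hx => by
    have := hFmono (self_mem_Ici) (mem_Ici.2 hx) hx
    rwa [hF0] at this
  -- pointwise flow facts
  have hflow_mono : ∀ s : ℝ, 0 < s → MonotoneOn (fun t => F (s * t) / F s) (Ici (0:ℝ)) := by
    intro s hs x hx y hy hxy
    have h1 : F (s * x) ≤ F (s * y) := hFmono (mem_Ici.2 (mul_nonneg hs.le hx))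
      (mem_Ici.2 (mul_nonneg hs.le hy)) (by nlinarith [mem_Ici.1 hx])
    have hs' := hFpos s hs
    simp only []
    gcongr
  have hflow_nn : ∀ s : ℝ, 0 < s → ∀ t : ℝ, 0 ≤ t → 0 ≤ F (s * t) / F s := by
    intro s hs t ht
    exact div_nonneg (hFnn _ (mul_nonneg hs.le ht)) (hFpos s hs).le
  have hflow_one : ∀ s : ℝ, 0 < s → F (s * 1) / F s = 1 := by
    intro s hs
    rw [mul_one, div_self (hFpos s hs).ne']
  have hflow_conv : ∀ s : ℝ, 0 < s → ConvexOn ℝ (Ici (0:ℝ)) (fun t => F (s * t) / F s) := by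
    intro s hs
    refine ⟨convex_Ici 0, fun x hx y hy a b ha hb hab => ?_⟩
    have h1 : F (s * (a * x + b * y)) ≤ a * F (s * x) + b * F (s * y) := by
      have harg : s * (a * x + b * y) = a * (s * x) + b * (s * y) := by ring
      rw [harg]
      exact hFconv.2 (mem_Ici.2 (mul_nonneg hs.le (mem_Ici.1 hx)))
        (mem_Ici.2 (mul_nonneg hs.le (mem_Ici.1 hy))) ha hb hab
    have hFs := hFpos s hs
    rw [div_le_iff₀ hFs] at *
    calc F (s * (a * x + b * y)) ≤ a * F (s * x) + b * F (s * y) := h1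
      _ = (a * (F (s * x) / F s) + b * (F (s * y) / F s)) * F s := by
          field_simp
  -- facts about G
  have hG0 : G 0 = 0 := by
    have h1 : Tendsto (fun s : ℝ => F (s * 0) / F s) atTop (𝓝 0) := by
      simp only [mul_zero, hF0, zero_div]
      exact tendsto_const_nhds
    exact tendsto_nhds_unique (hG 0 le_rfl) h1
  have hG1 : G 1 = 1 := by
    have h1 : Tendsto (fun s : ℝ => F (s * 1) / F s) atTop (𝓝 1) := by
      have : (fun s : ℝ => F (s * 1) / F s) =ᶠ[atTop] fun _ => (1:ℝ) :=
        (eventually_gt_atTop 0).mono fun s hs => hflow_one s hs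
      exact Tendsto.congr' this.symm tendsto_const_nhds
    exact tendsto_nhds_unique (hG 1 zero_le_one) h1
  have hGmono : MonotoneOn G (Ici (0:ℝ)) := by
    intro x hx y hy hxy
    refine le_of_tendsto_of_tendsto (hG x (mem_Ici.1 hx)) (hG y (mem_Ici.1 hy)) ?_
    filter_upwards [eventually_gt_atTop (0:ℝ)] with s hs
    exact hflow_mono s hs (mem_Ici.2 (mem_Ici.1 hx)) (mem_Ici.2 (mem_Ici.1 hy)) hxy
  have hGconv : ConvexOn ℝ (Ici (0:ℝ)) G := by
    refine ⟨convex_Ici 0, fun x hx y hy a b ha hb hab => ?_⟩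
    have hxy : (0:ℝ) ≤ a * x + b * y :=
      add_nonneg (mul_nonneg ha (mem_Ici.1 hx)) (mul_nonneg hb (mem_Ici.1 hy))
    refine le_of_tendsto_of_tendsto (hG _ hxy)
      (((hG x (mem_Ici.1 hx)).const_mul a).add ((hG y (mem_Ici.1 hy)).const_mul b)) ?_
    filter_upwards [eventually_gt_atTop (0:ℝ)] with s hs
    have := (hflow_conv s hs).2 hx hy ha hb hab
    simpa using this
  have hGnn : ∀ t : ℝ, 0 ≤ t → 0 ≤ G t := by
    intro t ht
    have := hGmono (self_mem_Ici) (mem_Ici.2 ht) ht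
    rwa [hG0] at this
  have hGlip : ∀ u v : ℝ, 0 ≤ u → u ≤ v → v ≤ 3/4 → |G v - G u| ≤ 4 * (v - u) :=
    fun u v hu huv hv => aux_lip G hGconv hGmono hGnn hG1 hu huv hv
  have hflip : ∀ s : ℝ, 0 < s → ∀ u v : ℝ, 0 ≤ u → u ≤ v → v ≤ 3/4 →
      |F (s*v)/F s - F (s*u)/F s| ≤ 4 * (v - u) :=
    fun s hs u v hu huv hv => aux_lip _ (hflow_conv s hs) (hflow_mono s hs)
      (fun x hx => hflow_nn s hs x hx) (hflow_one s hs) hu huv hv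
  have part4 : MemFlowClosure F G := by
    intro b hb ε hε
    obtain ⟨N, hN⟩ := exists_nat_ge (6/ε)
    set M : ℕ := N + 1 with hM
    have hMR : (6:ℝ)/ε ≤ M := le_trans hN (by exact_mod_cast Nat.le_succ N)
    have hMpos : (0:ℝ) < M := by positivity
    have h2M : (0:ℝ) < 2*M := by linarith
    have hstep : 4 * ((1:ℝ)/(2*M)) ≤ ε/3 := by
      have h6 : (6:ℝ) ≤ M * ε := by
        rw [div_le_iff₀ hε] at hMR; linarith
      rw [mul_one_div, div_le_div_iff₀ h2M (by norm_num : (0:ℝ) < 3)]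
      nlinarith
    have hev : ∀ᶠ s : ℝ in atTop, (b < s ∧ 0 < s) ∧
        ∀ i : Fin (M+1), |F (s * ((i:ℝ)/(2*M))) / F s - G ((i:ℝ)/(2*M))| ≤ ε/3 := by
      refine ((eventually_gt_atTop b).and (eventually_gt_atTop 0)).and
        (eventually_all.2 fun i => ?_)
      have hti : (0:ℝ) ≤ (i:ℝ)/(2*M) := by positivity
      have h2 := Metric.tendsto_nhds.mp (hG _ hti) (ε/3) (by linarith)
      filter_upwards [h2] with s hs
      rw [Real.dist_eq] at hs
      exact hs.le
    obtain ⟨s, ⟨hbs, hs0⟩, hgrid⟩ := hev.exists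
    refine ⟨s, hbs, fun t ht => ?_⟩
    obtain ⟨ht0, ht2⟩ := ht
    set i : ℕ := ⌊2*M*t⌋₊ with hidef
    have hiM : i ≤ M := by
      have h1 : 2*(M:ℝ)*t ≤ M := by nlinarith
      calc i ≤ ⌊(M:ℝ)⌋₊ := Nat.floor_le_floor h1
        _ = M := Nat.floor_natCast M
    have hfl : (i:ℝ) ≤ 2*M*t := Nat.floor_le (by positivity)
    have hfu : 2*(M:ℝ)*t < i + 1 := Nat.lt_floor_add_one _
    set p : ℝ := (i:ℝ)/(2*M) with hpdef
    have hp0 : 0 ≤ p := by positivity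
    have hpt : p ≤ t := by
      rw [hpdef, div_le_iff₀ h2M]; linarith
    have htp : t - p ≤ 1/(2*M) := by
      have hpi : p * (2*M) = i := by rw [hpdef]; field_simp
      rw [le_div_iff₀ h2M]
      nlinarith
    have ht34 : t ≤ 3/4 := by linarith
    have hA := hflip s hs0 p t hp0 hpt ht34
    have hB := hGlip p t hp0 hpt ht34
    have hmid : |F (s * p) / F s - G p| ≤ ε/3 := hgrid ⟨i, by omega⟩
    have h4tp : 4 * (t - p) ≤ ε/3 := le_trans (by linarith) hstep
    calc |F (s * t) / F s - G t|
        ≤ |F (s * t) / F s - F (s * p) / F s| + |F (s * p) / F s - G t| :=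
          abs_sub_le _ _ _
      _ ≤ |F (s * t) / F s - F (s * p) / F s| + (|F (s * p) / F s - G p| + |G p - G t|) :=
          by linarith [abs_sub_le (F (s * p) / F s) (G p) (G t)]
      _ ≤ ε/3 + (ε/3 + ε/3) := by
          have hB' : |G p - G t| ≤ 4 * (t - p) := by
            rw [abs_sub_comm]; exact hB
          linarith
      _ = ε := by ring
  have part3 : ∀ H : ℝ → ℝ, MemFlowConvexClosure F H → ∀ t ∈ Icc (0:ℝ) (1/2), H t = G t := by
    intro H hH t ht
    have key : ∀ ε : ℝ, 0 < ε → |H t - G t| ≤ ε := by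
      intro ε hε
      have h2 := Metric.tendsto_nhds.mp (hG t ht.1) (ε/2) (by linarith)
      rw [eventually_atTop] at h2
      obtain ⟨b₀, hb₀⟩ := h2
      obtain ⟨m, lam, ss, hlam, hsum, hbs, hclose⟩ :=
        hH (max b₀ 0) (le_max_right _ _) (ε/2) (by linarith)
      have hmid : |(∑ i, lam i * (F (ss i * t) / F (ss i))) - G t| ≤ ε/2 := by
        have hrw : (∑ i, lam i * (F (ss i * t) / F (ss i))) - G t
            = ∑ i, lam i * (F (ss i * t) / F (ss i) - G t) := by
          simp only [mul_sub, Finset.sum_sub_distrib, ← Finset.sum_mul, hsum, one_mul]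
        rw [hrw]
        calc |∑ i, lam i * (F (ss i * t) / F (ss i) - G t)|
            ≤ ∑ i, |lam i * (F (ss i * t) / F (ss i) - G t)| :=
              Finset.abs_sum_le_sum_abs _ _
          _ ≤ ∑ i, lam i * (ε/2) := by
              refine Finset.sum_le_sum fun i _ => ?_
              rw [abs_mul, abs_of_nonneg (hlam i)]
              refine mul_le_mul_of_nonneg_left ?_ (hlam i)
              have hsi : b₀ ≤ ss i := le_trans (le_max_left _ _) (hbs i).le
              have := hb₀ (ss i) hsi
              rw [Real.dist_eq] at this
              exact this.le
          _ = ε/2 := by rw [← Finset.sum_mul, hsum, one_mul]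
      have hHt := hclose t ht
      calc |H t - G t|
          ≤ |H t - (∑ i, lam i * (F (ss i * t) / F (ss i)))|
            + |(∑ i, lam i * (F (ss i * t) / F (ss i))) - G t| := abs_sub_le _ _ _
        _ ≤ ε/2 + ε/2 := by
            rw [abs_sub_comm]
            linarith
        _ = ε := by ring
    have h0 : |H t - G t| ≤ 0 := by
      refine le_of_forall_pos_le_add fun ε hε => ?_
      simpa using key ε hε
    exact sub_eq_zero.mp (abs_eq_zero.mp (le_antisymm h0 (abs_nonneg _)))
  refine ⟨⟨hGconv, hGmono, hG0⟩, ?_, part3, part4⟩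
  intro H
  constructor
  · intro hH b hb ε hε
    obtain ⟨s, hbs, hclose⟩ := hH b hb ε hε
    exact ⟨1, fun _ => 1, fun _ => s, fun _ => zero_le_one, by simp, fun _ => hbs,
      fun t ht => by simpa [Fin.sum_univ_one] using hclose t ht⟩
  · intro hH b hb ε hε
    obtain ⟨s, hbs, hclose⟩ := part4 b hb ε hε
    refine ⟨s, hbs, fun t ht => ?_⟩
    rw [part3 H hH t ht]
    exact hclose t ht
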